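/- Let Z be a càdlàg κ-self-similar process on ℝ, let ζ be a subordinator independent of Z, and for a∈ℝ set X^{(a)}_t = t^κ e^{-κ ζ_{a+ln t}} Z_{exp(ζ_{a+ln t})} for t ≥ e^{-a}. Then for every c>0, every n, and all times t₁<⋯<t_n with t_i ≥ e^{-a} and c t_i ≥ e^{-a} for all i, the random vector (X^{(a)}_{ct₁},…,X^{(a)}_{ct_n}) has the same distribution as c^κ (X^{(a)}_{t₁},…,X^{(a)}_{t_n}). In particular, the process X of the time-change construction is κ-self-similar, and extends to t=0 by X₀=0. -/

import Mathlib

open MeasureTheory ProbabilityTheory Real Filter Set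
open scoped ENNReal NNReal

noncomputable section

variable {Ω : Type*} [MeasurableSpace Ω]

/-- A real function is càdlàg on `[0,∞)`: right-continuous everywhere on `[0,∞)`, with left
limits at every `t > 0`. -/
def CadlagOn (f : ℝ → ℝ) : Prop :=
  (∀ t : ℝ, 0 ≤ t → ContinuousWithinAt f (Set.Ici t) t) ∧
  (∀ t : ℝ, 0 < t → ∃ l, Filter.Tendsto f (nhdsWithin t (Set.Iio t)) (nhds l))

/-- `κ`-self-similarity: for every `c > 0` the finite-dimensional distributions of `(X_{ct})`
and `(c^κ X_t)` agree. -/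
def SelfSimilar (κ : ℝ) (X : ℝ → Ω → ℝ) (μ : Measure Ω) : Prop :=
  ∀ c : ℝ, 0 < c → ∀ (n : ℕ) (t : Fin n → ℝ), (∀ i, 0 ≤ t i) →
    Measure.map (fun ω i => X (c * t i) ω) μ
      = Measure.map (fun ω i => c ^ κ * X (t i) ω) μ

/-- Independent increments (over the time domain `[0,∞)`). -/
def HasIndepIncrements (ζ : ℝ → Ω → ℝ) (μ : Measure Ω) : Prop :=
  ∀ (n : ℕ) (t : Fin (n + 1) → ℝ), Monotone t → (∀ i, 0 ≤ t i) →
    iIndepFun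
      (fun (i : Fin n) ω => ζ (t i.succ) ω - ζ (t i.castSucc) ω) μ

/-- Stationary increments: `ζ_{s+t} − ζ_s` is distributed as `ζ_t`. -/
def HasStatIncrements (ζ : ℝ → Ω → ℝ) (μ : Measure Ω) : Prop :=
  ∀ s t : ℝ, 0 ≤ s → 0 ≤ t →
    Measure.map (fun ω => ζ (s + t) ω - ζ s ω) μ = Measure.map (ζ t) μ

/-- A subordinator: a càdlàg process with `ζ₀ = 0`, nondecreasing paths, and independent
stationary increments. -/
structure IsSubordinator (ζ : ℝ → Ω → ℝ) (μ : Measure Ω) : Prop where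
  meas : ∀ t, Measurable (ζ t)
  zero : ∀ ω, ζ 0 ω = 0
  mono : ∀ ω, MonotoneOn (fun t => ζ t ω) (Set.Ici 0)
  cadlag : ∀ ω, CadlagOn fun t => ζ t ω
  stat : HasStatIncrements ζ μ
  indep : _root_.HasIndepIncrements ζ μ

/-- Independence of two processes: the σ-algebras they generate are independent. -/
def IndepProcesses (Z ζ : ℝ → Ω → ℝ) (μ : Measure Ω) : Prop :=
  Indep (⨆ t : ℝ, MeasurableSpace.comap (Z t) inferInstance)
        (⨆ t : ℝ, MeasurableSpace.comap (ζ t) inferInstance) μ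

/-- The time-changed process `X^{(a)}_t = t^κ e^{−κ ζ_{a+ln t}} Z_{exp(ζ_{a+ln t})}`. -/
def Xa (κ : ℝ) (Z ζ : ℝ → Ω → ℝ) (a t : ℝ) (ω : Ω) : ℝ :=
  t ^ κ * Real.exp (-(κ * ζ (a + Real.log t) ω)) * Z (Real.exp (ζ (a + Real.log t) ω)) ω


section AuxLemmas



lemma aux_measurable_comp_countable {α : Type*} [MeasurableSpace α] {g : α → ℝ}
    (hg : Measurable g) (hc : (Set.range g).Countable) {H : ℝ → α → ℝ}
    (hH : ∀ r, Measurable (H r)) : Measurable fun x => H (g x) x := by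
  haveI : Countable ↥(Set.range g) := hc.to_subtype
  intro B hB
  have hset : (fun x => H (g x) x) ⁻¹' B
      = ⋃ r : Set.range g, ({x | g x = (r : ℝ)} ∩ (H (r : ℝ) ⁻¹' B)) := by
    ext x
    simp only [Set.mem_preimage, Set.mem_iUnion, Set.mem_inter_iff, Set.mem_setOf_eq]
    constructor
    · intro hx; exact ⟨⟨g x, Set.mem_range_self x⟩, rfl, hx⟩
    · rintro ⟨r, hr, hx⟩; rw [hr]; exact hx
  rw [hset]
  exact MeasurableSet.iUnion fun r =>
    (hg (measurableSet_singleton (r : ℝ))).inter ((hH (r : ℝ)) hB)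

/-- dyadic upper approximation -/
def dyadUp (n : ℕ) (x : ℝ) : ℝ := (⌈x * 2 ^ n⌉ : ℤ) / 2 ^ n

lemma dyadUp_measurable (n : ℕ) : Measurable (dyadUp n) := by
  unfold dyadUp
  have h1 : Measurable fun x : ℝ => (⌈x * 2 ^ n⌉ : ℤ) :=
    Int.measurable_ceil.comp (measurable_id.mul_const _)
  exact ((measurable_of_countable (fun k : ℤ => (k:ℝ))).comp h1).div_const _

lemma dyadUp_range_countable (n : ℕ) : (Set.range (dyadUp n)).Countable := by
  have : Set.range (dyadUp n) ⊆ Set.range (fun k : ℤ => (k : ℝ) / 2 ^ n) := by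
    rintro y ⟨x, rfl⟩; exact ⟨⌈x * 2 ^ n⌉, rfl⟩
  exact (Set.countable_range _).mono this

lemma le_dyadUp (n : ℕ) (x : ℝ) : x ≤ dyadUp n x := by
  have h2 : (0:ℝ) < 2 ^ n := by positivity
  rw [dyadUp, le_div_iff₀ h2]
  exact Int.le_ceil _

lemma dyadUp_le (n : ℕ) (x : ℝ) : dyadUp n x ≤ x + ((2:ℝ) ^ n)⁻¹ := by
  have h2 : (0:ℝ) < 2 ^ n := by positivity
  rw [dyadUp, div_le_iff₀ h2]
  have := (Int.ceil_lt_add_one (x * 2 ^ n)).le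
  calc (⌈x * 2 ^ n⌉ : ℝ) ≤ x * 2 ^ n + 1 := this
    _ = (x + ((2:ℝ) ^ n)⁻¹) * 2 ^ n := by field_simp

lemma tendsto_dyadUp (x : ℝ) :
    Tendsto (fun n => dyadUp n x) atTop (nhdsWithin x (Set.Ici x)) := by
  rw [tendsto_nhdsWithin_iff]
  constructor
  · have hupper : Tendsto (fun n : ℕ => x + ((2:ℝ) ^ n)⁻¹) atTop (nhds x) := by
      have : Tendsto (fun n : ℕ => ((2:ℝ) ^ n)⁻¹) atTop (nhds 0) :=
        tendsto_inv_atTop_zero.comp (tendsto_pow_atTop_atTop_of_one_lt one_lt_two)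
      simpa using tendsto_const_nhds.add this
    exact tendsto_of_tendsto_of_tendsto_of_le_of_le tendsto_const_nhds hupper
      (fun n => le_dyadUp n x) (fun n => dyadUp_le n x)
  · exact Filter.Eventually.of_forall fun n => le_dyadUp n x

lemma tendsto_comp_dyadUp {f : ℝ → ℝ} {x : ℝ}
    (hf : ContinuousWithinAt f (Set.Ici x) x) :
    Tendsto (fun n => f (dyadUp n x)) atTop (nhds (f x)) :=
  hf.tendsto.comp (tendsto_dyadUp x)

lemma aux_telescope {m : ℕ} (g : ℕ → ℝ) (k : ℕ) (hk : k ≤ m) :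
    (∑ j : Fin m, if (j : ℕ) < k then g ((j : ℕ) + 1) - g (j : ℕ) else 0) = g k - g 0 := by
  rw [Fin.sum_univ_eq_sum_range (fun j => if j < k then g (j + 1) - g j else 0) m]
  have h1 : ∑ j ∈ Finset.range m, (if j < k then g (j + 1) - g j else 0)
      = ∑ j ∈ Finset.range k, (if j < k then g (j + 1) - g j else 0) := by
    refine (Finset.sum_subset (Finset.range_subset_range.2 hk) ?_).symm
    intro x _ hxk
    exact if_neg (by simpa using hxk)
  rw [h1]
  rw [Finset.sum_congr rfl (fun j hj => if_pos (Finset.mem_range.1 hj))]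
  exact Finset.sum_range_sub g k

lemma aux_iIndepFun_map_pi {m : ℕ} {D : Fin m → Ω → ℝ} {μ : Measure Ω}
    [IsProbabilityMeasure μ] (hD : ∀ j, Measurable (D j))
    (h : iIndepFun D μ) :
    μ.map (fun ω j => D j ω) = Measure.pi (fun j => μ.map (D j)) := by
  haveI : ∀ j, IsProbabilityMeasure (μ.map (D j)) := fun j =>
    Measure.isProbabilityMeasure_map (hD j).aemeasurable
  refine (Measure.pi_eq fun s hs => ?_).symm
  rw [Measure.map_apply (measurable_pi_lambda _ fun j => hD j) (MeasurableSet.univ_pi hs)]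
  have hpre : (fun ω j => D j ω) ⁻¹' (Set.pi Set.univ s) = ⋂ j ∈ Finset.univ, D j ⁻¹' s j := by
    ext ω; simp [Set.mem_univ_pi]
  rw [hpre, h.measure_inter_preimage_eq_mul Finset.univ (fun j _ => hs j)]
  exact Finset.prod_congr rfl fun j _ =>
    (Measure.map_apply (hD j) (hs j)).symm



def cumSum (m : ℕ) (w : Fin m → ℝ) (i : Fin (m + 1)) : ℝ :=
  ∑ j : Fin m, if (j : ℕ) < (i : ℕ) then w j else 0

lemma cumSum_measurable (m : ℕ) : Measurable (cumSum m) := by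
  refine measurable_pi_lambda _ fun i => ?_
  refine Finset.measurable_sum _ fun j _ => ?_
  by_cases hj : (j : ℕ) < (i : ℕ)
  · simpa [cumSum, hj] using measurable_pi_apply j
  · simpa [cumSum, hj] using measurable_const

lemma aux_fdd_incr {μ : Measure Ω} [IsProbabilityMeasure μ] {ζ : ℝ → Ω → ℝ}
    (hζ : IsSubordinator ζ μ) {m : ℕ}
    (s : Fin (m + 1) → ℝ) (hs : Monotone s) (h0 : ∀ i, 0 ≤ s i) :
    μ.map (fun ω i => ζ (s i) ω - ζ (s 0) ω)
      = (Measure.pi fun j : Fin m =>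
          μ.map (ζ (s j.succ - s j.castSucc))).map (cumSum m) := by
  have hD : ∀ j : Fin m, Measurable fun ω => ζ (s j.succ) ω - ζ (s j.castSucc) ω :=
    fun j => (hζ.meas _).sub (hζ.meas _)
  have hmap : μ.map (fun ω j => ζ (s (Fin.succ j)) ω - ζ (s (Fin.castSucc j)) ω)
      = Measure.pi (fun j : Fin m => μ.map (fun ω => ζ (s j.succ) ω - ζ (s j.castSucc) ω)) :=
    aux_iIndepFun_map_pi hD (hζ.indep m s hs h0)
  have hmarg : ∀ j : Fin m, μ.map (fun ω => ζ (s j.succ) ω - ζ (s j.castSucc) ω)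
      = μ.map (ζ (s j.succ - s j.castSucc)) := by
    intro j
    have hle : s j.castSucc ≤ s j.succ := hs (Fin.castSucc_lt_succ : j.castSucc < j.succ).le
    have := hζ.stat (s j.castSucc) (s j.succ - s j.castSucc) (h0 _) (sub_nonneg.2 hle)
    simpa [add_sub_cancel] using this
  have hfun : (fun ω (i : Fin (m + 1)) => ζ (s i) ω - ζ (s 0) ω)
      = (cumSum m) ∘ (fun ω j => ζ (s (Fin.succ j)) ω - ζ (s (Fin.castSucc j)) ω) := by
    funext ω
    funext i
    show ζ (s i) ω - ζ (s 0) ω = ∑ j : Fin m,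
      if (j : ℕ) < (i : ℕ) then ζ (s (Fin.succ j)) ω - ζ (s (Fin.castSucc j)) ω else 0
    set g : ℕ → ℝ := fun k => ζ (s ⟨min k m, Nat.lt_succ_of_le (min_le_right k m)⟩) ω with hg
    have hcongr : ∀ j : Fin m,
        (if (j : ℕ) < (i : ℕ) then ζ (s (Fin.succ j)) ω - ζ (s (Fin.castSucc j)) ω else 0)
        = (if (j : ℕ) < (i : ℕ) then g ((j : ℕ) + 1) - g (j : ℕ) else 0) := by
      intro j
      by_cases hj : (j : ℕ) < (i : ℕ)
      · rw [if_pos hj, if_pos hj]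
        have h1 : (⟨min ((j : ℕ) + 1) m, Nat.lt_succ_of_le (min_le_right _ m)⟩ : Fin (m+1))
            = Fin.succ j := by
          apply Fin.ext; simp [Nat.succ_le_of_lt j.isLt]
        have h2 : (⟨min (j : ℕ) m, Nat.lt_succ_of_le (min_le_right _ m)⟩ : Fin (m+1))
            = Fin.castSucc j := by
          apply Fin.ext; simp [le_of_lt j.isLt]
        rw [hg]
        simp only []
        rw [h1, h2]
      · rw [if_neg hj, if_neg hj]
    rw [Finset.sum_congr rfl (fun j _ => hcongr j)]
    rw [aux_telescope g (i : ℕ) (Nat.lt_succ_iff.1 i.isLt)]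
    have h3 : (⟨min (i : ℕ) m, Nat.lt_succ_of_le (min_le_right _ m)⟩ : Fin (m+1)) = i := by
      apply Fin.ext; simp [Nat.lt_succ_iff.1 i.isLt]
    have h4 : (⟨min 0 m, Nat.lt_succ_of_le (min_le_right _ m)⟩ : Fin (m+1)) = 0 := by
      apply Fin.ext; simp
    rw [hg]; simp only []
    rw [h3, h4]
  rw [hfun, ← Measure.map_map (cumSum_measurable m) (measurable_pi_lambda _ hD), hmap]
  exact congrArg (Measure.map (cumSum m)) (congrArg Measure.pi (funext hmarg))

lemma aux_incr_law {μ : Measure Ω} [IsProbabilityMeasure μ] {ζ : ℝ → Ω → ℝ}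
    (hζ : IsSubordinator ζ μ) {m : ℕ}
    (s s' : Fin (m + 1) → ℝ) (hs : Monotone s) (hs' : Monotone s')
    (h0 : ∀ i, 0 ≤ s i) (h0' : ∀ i, 0 ≤ s' i)
    (hdiff : ∀ i, s' i - s' 0 = s i - s 0) :
    μ.map (fun ω i => ζ (s' i) ω - ζ (s' 0) ω)
      = μ.map (fun ω i => ζ (s i) ω - ζ (s 0) ω) := by
  rw [aux_fdd_incr hζ s hs h0, aux_fdd_incr hζ s' hs' h0']
  have : ∀ j : Fin m, s' j.succ - s' j.castSucc = s j.succ - s j.castSucc := by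
    intro j
    have h1 := hdiff j.succ
    have h2 := hdiff j.castSucc
    linarith
  rw [funext fun j => congrArg (fun x => Measure.map (ζ x) μ) (this j)]

lemma Xa_measurable (κ : ℝ) (Z ζ : ℝ → Ω → ℝ) (hZmeas : ∀ t, Measurable (Z t))
    (hZcadlag : ∀ ω, CadlagOn fun t => Z t ω) (hζmeas : ∀ t, Measurable (ζ t))
    (a u : ℝ) : Measurable (Xa κ Z ζ a u) := by
  set s := a + Real.log u with hs
  have hZr : Measurable fun ω => Z (Real.exp (ζ s ω)) ω := by
    have happrox : ∀ N : ℕ, Measurable fun ω => Z (dyadUp N (Real.exp (ζ s ω))) ω := by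
      intro N
      refine aux_measurable_comp_countable
        ((dyadUp_measurable N).comp (Real.measurable_exp.comp (hζmeas s))) ?_ hZmeas
      refine (dyadUp_range_countable N).mono ?_
      rintro y ⟨ω, rfl⟩; exact ⟨Real.exp (ζ s ω), rfl⟩
    refine measurable_of_tendsto_metrizable' atTop happrox ?_
    rw [tendsto_pi_nhds]
    intro ω
    exact tendsto_comp_dyadUp ((hZcadlag ω).1 _ (Real.exp_pos _).le)
  exact (measurable_const.mul
    (Real.measurable_exp.comp ((hζmeas s).const_mul κ).neg)).mul hZr


lemma part1 (μ : Measure Ω) [IsProbabilityMeasure μ]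
    (κ : ℝ) (Z ζ : ℝ → Ω → ℝ)
    (hZmeas : ∀ t, Measurable (Z t))
    (hZcadlag : ∀ ω, CadlagOn fun t => Z t ω)
    (hZss : SelfSimilar κ Z μ)
    (hζ : IsSubordinator ζ μ)
    (hindep : IndepProcesses Z ζ μ)
    (a : ℝ) (c : ℝ) (hc : 0 < c) (n : ℕ) (t : Fin n → ℝ) (ht : StrictMono t)
    (hta : ∀ i, Real.exp (-a) ≤ t i) (hcta : ∀ i, Real.exp (-a) ≤ c * t i) :
    Measure.map (fun ω i => Xa κ Z ζ a (c * t i) ω) μ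
      = Measure.map (fun ω i => c ^ κ * Xa κ Z ζ a (t i) ω) μ := by
  match n, t, ht, hta, hcta with
  | 0, t, ht, hta, hcta =>
    have he : (fun ω (i : Fin 0) => Xa κ Z ζ a (c * t i) ω)
        = fun ω (i : Fin 0) => c ^ κ * Xa κ Z ζ a (t i) ω := by
      funext ω i; exact i.elim0
    rw [he]
  | m + 1, t, ht, hta, hcta =>
  have htpos : ∀ i, 0 < t i := fun i => lt_of_lt_of_le (Real.exp_pos _) (hta i)
  have hctpos : ∀ i, 0 < c * t i := fun i => lt_of_lt_of_le (Real.exp_pos _) (hcta i)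
  set s : Fin (m + 1) → ℝ := fun i => a + Real.log (t i) with hs_def
  set s' : Fin (m + 1) → ℝ := fun i => a + Real.log (c * t i) with hs'_def
  have hs0 : ∀ i, 0 ≤ s i := by
    intro i
    have h := (Real.le_log_iff_exp_le (htpos i)).2 (hta i)
    simp only [hs_def]; linarith
  have hs'0 : ∀ i, 0 ≤ s' i := by
    intro i
    have h := (Real.le_log_iff_exp_le (hctpos i)).2 (hcta i)
    simp only [hs'_def]; linarith
  have hsmono : Monotone s := by
    intro i j hij
    have := Real.log_le_log (htpos i) (ht.monotone hij)
    simp only [hs_def]; linarith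
  have hs'eq : ∀ i, s' i = s i + Real.log c := by
    intro i
    simp only [hs_def, hs'_def, Real.log_mul (ne_of_gt hc) (ne_of_gt (htpos i))]
    ring
  have hs'mono : Monotone s' := by
    intro i j hij
    rw [hs'eq i, hs'eq j]
    exact add_le_add_left (hsmono hij) _
  -- processes
  set F : Ω → (ℝ → ℝ) := fun ω x => Z x ω with hF_def
  have hFmeas : Measurable F := measurable_pi_lambda _ fun x => hZmeas x
  set G : Ω → (Fin (m + 1) → ℝ) := fun ω i => ζ (s i) ω with hG_def
  set G' : Ω → (Fin (m + 1) → ℝ) := fun ω i => ζ (s' i) ω with hG'_def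
  have hGmeas : Measurable G := measurable_pi_lambda _ fun i => hζ.meas _
  have hG'meas : Measurable G' := measurable_pi_lambda _ fun i => hζ.meas _
  set P : Measure (ℝ → ℝ) := μ.map F with hP_def
  set Q : Measure (Fin (m + 1) → ℝ) := μ.map G with hQ_def
  set Q' : Measure (Fin (m + 1) → ℝ) := μ.map G' with hQ'_def
  haveI : IsProbabilityMeasure P := Measure.isProbabilityMeasure_map hFmeas.aemeasurable
  haveI : IsProbabilityMeasure Q := Measure.isProbabilityMeasure_map hGmeas.aemeasurable
  haveI : IsProbabilityMeasure Q' := Measure.isProbabilityMeasure_map hG'meas.aemeasurable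
  set incr : (Fin (m + 1) → ℝ) → (Fin (m + 1) → ℝ) := fun u i => u i - u 0 with hincr_def
  have hincr_meas : Measurable incr :=
    measurable_pi_lambda _ fun i => (measurable_pi_apply i).sub (measurable_pi_apply 0)
  haveI : IsProbabilityMeasure (Q.map incr) :=
    Measure.isProbabilityMeasure_map hincr_meas.aemeasurable
  have hQQ' : Q'.map incr = Q.map incr := by
    rw [hQ_def, hQ'_def, Measure.map_map hincr_meas hGmeas,
      Measure.map_map hincr_meas hG'meas]
    exact aux_incr_law hζ s s' hsmono hs'mono hs0 hs'0
      (fun i => by rw [hs'eq i, hs'eq 0]; ring)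
  -- approximation scheme
  set Φ : ℕ → (Fin (m + 1) → ℝ) × (ℝ → ℝ) → (Fin (m + 1) → ℝ) :=
    fun N p i => Real.exp (-(κ * p.1 i)) * p.2 (dyadUp N (Real.exp (p.1 i))) with hΦ_def
  have hΦmeas : ∀ N, Measurable (Φ N) := by
    intro N
    refine measurable_pi_lambda _ fun i => Measurable.mul ?_ ?_
    · have h1 : Measurable fun p : (Fin (m + 1) → ℝ) × (ℝ → ℝ) => p.1 i :=
        (measurable_pi_apply i).comp measurable_fst
      exact Real.measurable_exp.comp (h1.const_mul κ).neg
    · have h1 : Measurable fun p : (Fin (m + 1) → ℝ) × (ℝ → ℝ) => p.1 i :=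
        (measurable_pi_apply i).comp measurable_fst
      have hg : Measurable fun p : (Fin (m + 1) → ℝ) × (ℝ → ℝ) =>
          dyadUp N (Real.exp (p.1 i)) :=
        (dyadUp_measurable N).comp (Real.measurable_exp.comp h1)
      have hcnt : (Set.range fun p : (Fin (m + 1) → ℝ) × (ℝ → ℝ) =>
          dyadUp N (Real.exp (p.1 i))).Countable := by
        refine (dyadUp_range_countable N).mono ?_
        rintro y ⟨p, rfl⟩; exact ⟨Real.exp (p.1 i), rfl⟩
      exact aux_measurable_comp_countable hg hcnt
        (fun r => (measurable_pi_apply r).comp measurable_snd)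
  set T : (Fin (m + 1) → ℝ) → (ℝ → ℝ) → (Fin (m + 1) → ℝ) :=
    fun u f i => Real.exp (-(κ * u i)) * f (Real.exp (u i)) with hT_def
  have hTmeas : ∀ u, Measurable (T u) :=
    fun u => measurable_pi_lambda _ fun i => (measurable_pi_apply _).const_mul _
  set Vd : (Fin (m + 1) → ℝ) → Ω → (Fin (m + 1) → ℝ) :=
    fun u ω i => Real.exp (-(κ * u i)) * Z (Real.exp (u i)) ω with hVd_def
  have hVdmeas : ∀ u, Measurable (Vd u) :=
    fun u => measurable_pi_lambda _ fun i => (hZmeas _).const_mul _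
  have hconv : ∀ (u : Fin (m + 1) → ℝ) (f : ℝ → ℝ),
      (∀ x : ℝ, 0 ≤ x → ContinuousWithinAt f (Set.Ici x) x) →
      Tendsto (fun N => Φ N (u, f)) atTop (nhds (T u f)) := by
    intro u f hf
    rw [tendsto_pi_nhds]
    intro i
    exact (tendsto_comp_dyadUp (hf _ (Real.exp_pos _).le)).const_mul _
  have hRmeas : ∀ u : Fin (m + 1) → ℝ,
      MeasurableSet {f : ℝ → ℝ | Tendsto (fun N => Φ N (u, f)) atTop (nhds (T u f))} :=
    fun u => measurableSet_tendsto_fun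
      (fun N => (hΦmeas N).comp measurable_prodMk_left) (hTmeas u)
  have hRfull : ∀ u : Fin (m + 1) → ℝ,
      P {f | ¬ Tendsto (fun N => Φ N (u, f)) atTop (nhds (T u f))} = 0 := by
    intro u
    have hset : {f : ℝ → ℝ | ¬ Tendsto (fun N => Φ N (u, f)) atTop (nhds (T u f))}
        = {f : ℝ → ℝ | Tendsto (fun N => Φ N (u, f)) atTop (nhds (T u f))}ᶜ := rfl
    rw [hset, hP_def, Measure.map_apply hFmeas (hRmeas u).compl]
    have : F ⁻¹' {f : ℝ → ℝ | Tendsto (fun N => Φ N (u, f)) atTop (nhds (T u f))}ᶜ = ∅ := by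
      rw [Set.eq_empty_iff_forall_notMem]
      intro ω hω
      exact hω (hconv u (F ω) (fun x hx => (hZcadlag ω).1 x hx))
    rw [this]; exact measure_empty
  -- limit function
  set ρ2 : Measure (Fin (m + 1) → ℝ) := (Q + Q') + Q.map incr with hρ2_def
  set ρ : Measure ((Fin (m + 1) → ℝ) × (ℝ → ℝ)) := ρ2.prod P with hρ_def
  have hae : ∀ᵐ p ∂ρ, ∃ l, Tendsto (fun N => Φ N p) atTop (nhds l) := by
    have hCmeas : MeasurableSet {p : (Fin (m + 1) → ℝ) × (ℝ → ℝ) |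
        ∃ l, Tendsto (fun N => Φ N p) atTop (nhds l)} :=
      measurableSet_exists_tendsto fun N => hΦmeas N
    rw [ae_iff]
    have hset : {p : (Fin (m + 1) → ℝ) × (ℝ → ℝ) |
        ¬ ∃ l, Tendsto (fun N => Φ N p) atTop (nhds l)}
        = {p : (Fin (m + 1) → ℝ) × (ℝ → ℝ) |
        ∃ l, Tendsto (fun N => Φ N p) atTop (nhds l)}ᶜ := rfl
    rw [hset, hρ_def, Measure.measure_prod_null hCmeas.compl]
    refine Filter.Eventually.of_forall fun u => ?_
    refine measure_mono_null ?_ (hRfull u)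
    intro f hf
    simp only [Set.mem_preimage, Set.mem_compl_iff, Set.mem_setOf_eq] at hf ⊢
    exact fun hten => hf ⟨T u f, hten⟩
  obtain ⟨Ψ, hΨmeas, hΨtendsto⟩ :=
    measurable_limit_of_tendsto_metrizable_ae (fun N => (hΦmeas N).aemeasurable) hae
  set TendS : Set ((Fin (m + 1) → ℝ) × (ℝ → ℝ)) :=
    {p | Tendsto (fun N => Φ N p) atTop (nhds (Ψ p))} with hTendS_def
  have hTendSmeas : MeasurableSet TendS := measurableSet_tendsto_fun hΦmeas hΨmeas
  have hρTendS : ρ TendSᶜ = 0 := by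
    have := hΨtendsto
    rw [ae_iff] at this
    exact this
  have hsplit : ρ TendSᶜ = (Q.prod P) TendSᶜ + (Q'.prod P) TendSᶜ
      + ((Q.map incr).prod P) TendSᶜ := by
    rw [hρ_def, hρ2_def, Measure.add_prod, Measure.add_prod]
    simp [Measure.add_apply]
  have hQP0 : (Q.prod P) TendSᶜ = 0 := by
    have h := hsplit.symm.trans hρTendS
    exact (add_eq_zero.1 ((add_eq_zero.1 h).1)).1
  have hQ'P0 : (Q'.prod P) TendSᶜ = 0 := by
    have h := hsplit.symm.trans hρTendS
    exact (add_eq_zero.1 ((add_eq_zero.1 h).1)).2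
  have hQincP0 : ((Q.map incr).prod P) TendSᶜ = 0 := by
    have h := hsplit.symm.trans hρTendS
    exact (add_eq_zero.1 h).2
  -- key identification lemma
  have keyA : ∀ u : Fin (m + 1) → ℝ, P (Prod.mk u ⁻¹' TendSᶜ) = 0 →
      P.map (fun f => Ψ (u, f)) = μ.map (Vd u) := by
    intro u hu
    have h1 : ∀ᵐ f ∂P, Tendsto (fun N => Φ N (u, f)) atTop (nhds (Ψ (u, f))) := by
      rw [ae_iff]
      exact hu
    have h2 : ∀ᵐ f ∂P, Tendsto (fun N => Φ N (u, f)) atTop (nhds (T u f)) := by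
      rw [ae_iff]
      exact hRfull u
    have h3 : ∀ᵐ f ∂P, Ψ (u, f) = T u f := by
      filter_upwards [h1, h2] with f hf1 hf2
      exact tendsto_nhds_unique hf1 hf2
    calc P.map (fun f => Ψ (u, f)) = P.map (T u) := Measure.map_congr h3
      _ = μ.map (T u ∘ F) := Measure.map_map (hTmeas u) hFmeas
      _ = μ.map (Vd u) := rfl
  -- self-similarity step
  have keyB : ∀ u : Fin (m + 1) → ℝ, μ.map (Vd u) = μ.map (Vd (incr u)) := by
    intro u
    have h := hZss (Real.exp (u 0)) (Real.exp_pos _) (m + 1)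
      (fun i => Real.exp (u i - u 0)) (fun i => (Real.exp_pos _).le)
    set M : (Fin (m + 1) → ℝ) → (Fin (m + 1) → ℝ) :=
      fun v i => Real.exp (-(κ * u i)) * v i with hM_def
    have hMmeas : Measurable M :=
      measurable_pi_lambda _ fun i => (measurable_pi_apply i).const_mul _
    have hlmeas : Measurable fun ω (i : Fin (m + 1)) =>
        Z (Real.exp (u 0) * Real.exp (u i - u 0)) ω :=
      measurable_pi_lambda _ fun i => hZmeas _
    have hrmeas : Measurable fun ω (i : Fin (m + 1)) =>
        Real.exp (u 0) ^ κ * Z (Real.exp (u i - u 0)) ω :=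
      measurable_pi_lambda _ fun i => (hZmeas _).const_mul _
    have e1 := congrArg (Measure.map M) h
    rw [Measure.map_map hMmeas hlmeas, Measure.map_map hMmeas hrmeas] at e1
    have hl : M ∘ (fun ω (i : Fin (m + 1)) => Z (Real.exp (u 0) * Real.exp (u i - u 0)) ω)
        = Vd u := by
      funext ω
      funext i
      show Real.exp (-(κ * u i)) * Z (Real.exp (u 0) * Real.exp (u i - u 0)) ω
        = Real.exp (-(κ * u i)) * Z (Real.exp (u i)) ω
      rw [← Real.exp_add]
      have harg : u 0 + (u i - u 0) = u i := by ring
      rw [harg]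
    have hr : M ∘ (fun ω (i : Fin (m + 1)) => Real.exp (u 0) ^ κ * Z (Real.exp (u i - u 0)) ω)
        = Vd (incr u) := by
      funext ω
      funext i
      show Real.exp (-(κ * u i)) * (Real.exp (u 0) ^ κ * Z (Real.exp (u i - u 0)) ω)
        = Real.exp (-(κ * (u i - u 0))) * Z (Real.exp (u i - u 0)) ω
      rw [Real.rpow_def_of_pos (Real.exp_pos _), Real.log_exp, ← mul_assoc, ← Real.exp_add]
      have harg : -(κ * u i) + u 0 * κ = -(κ * (u i - u 0)) := by ring
      rw [harg]
    rw [hl, hr] at e1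
    exact e1
  -- the core distributional identity
  have hcore : (Q'.prod P).map Ψ = (Q.prod P).map Ψ := by
    have hS2meas : MeasurableSet {u : Fin (m + 1) → ℝ | P (Prod.mk u ⁻¹' TendSᶜ) = 0} :=
      (measurable_measure_prodMk_left hTendSmeas.compl) (measurableSet_singleton 0)
    have haeQ : ∀ᵐ u ∂Q, P (Prod.mk u ⁻¹' TendSᶜ) = 0 := by
      have := (Measure.measure_prod_null hTendSmeas.compl).1 hQP0
      filter_upwards [this] with u hu using hu
    have haeQ' : ∀ᵐ u ∂Q', P (Prod.mk u ⁻¹' TendSᶜ) = 0 := by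
      have := (Measure.measure_prod_null hTendSmeas.compl).1 hQ'P0
      filter_upwards [this] with u hu using hu
    have haeQinc : ∀ᵐ u ∂(Q.map incr), P (Prod.mk u ⁻¹' TendSᶜ) = 0 := by
      have := (Measure.measure_prod_null hTendSmeas.compl).1 hQincP0
      filter_upwards [this] with u hu using hu
    have haeQincr : ∀ᵐ u ∂Q, P (Prod.mk (incr u) ⁻¹' TendSᶜ) = 0 :=
      (ae_map_iff hincr_meas.aemeasurable hS2meas).1 haeQinc
    have haeQ'incr : ∀ᵐ u ∂Q', P (Prod.mk (incr u) ⁻¹' TendSᶜ) = 0 := by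
      have h' : ∀ᵐ u ∂(Q'.map incr), P (Prod.mk u ⁻¹' TendSᶜ) = 0 := by
        rw [hQQ']; exact haeQinc
      exact (ae_map_iff hincr_meas.aemeasurable hS2meas).1 h'
    ext A hA
    rw [Measure.map_apply hΨmeas hA, Measure.map_apply hΨmeas hA,
      Measure.prod_apply (hΨmeas hA), Measure.prod_apply (hΨmeas hA)]
    set gA : (Fin (m + 1) → ℝ) → ℝ≥0∞ := fun u => P (Prod.mk u ⁻¹' (Ψ ⁻¹' A)) with hgA_def
    have hgAmeas : Measurable gA := measurable_measure_prodMk_left (hΨmeas hA)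
    have hpoint : ∀ u : Fin (m + 1) → ℝ, P (Prod.mk u ⁻¹' TendSᶜ) = 0 →
        P (Prod.mk (incr u) ⁻¹' TendSᶜ) = 0 → gA u = gA (incr u) := by
      intro u hu hiu
      have e1 : gA u = (P.map (fun f => Ψ (u, f))) A :=
        (Measure.map_apply
          (hΨmeas.comp measurable_prodMk_left : Measurable fun f => Ψ (u, f)) hA).symm
      have e2 : gA (incr u) = (P.map (fun f => Ψ (incr u, f))) A :=
        (Measure.map_apply
          (hΨmeas.comp measurable_prodMk_left : Measurable fun f => Ψ (incr u, f)) hA).symm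
      rw [e1, e2, keyA u hu, keyA _ hiu, keyB u]
    calc ∫⁻ u, gA u ∂Q' = ∫⁻ u, gA (incr u) ∂Q' := by
          refine lintegral_congr_ae ?_
          filter_upwards [haeQ', haeQ'incr] with u h1 h2 using hpoint u h1 h2
      _ = ∫⁻ w, gA w ∂(Q'.map incr) := (lintegral_map hgAmeas hincr_meas).symm
      _ = ∫⁻ w, gA w ∂(Q.map incr) := by rw [hQQ']
      _ = ∫⁻ u, gA (incr u) ∂Q := lintegral_map hgAmeas hincr_meas
      _ = ∫⁻ u, gA u ∂Q := by
          refine lintegral_congr_ae ?_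
          filter_upwards [haeQ, haeQincr] with u h1 h2 using (hpoint u h1 h2).symm
  -- independence: law of pairs
  have hF' : @Measurable Ω (ℝ → ℝ) (⨆ x : ℝ, MeasurableSpace.comap (Z x) inferInstance) _ F :=
    @measurable_pi_lambda Ω ℝ (fun _ => ℝ)
      (⨆ x : ℝ, MeasurableSpace.comap (Z x) inferInstance) _ F
      (fun x => measurable_iff_comap_le.2
        (le_iSup (fun y : ℝ => MeasurableSpace.comap (Z y) inferInstance) x))
  have hG'2 : @Measurable Ω (Fin (m + 1) → ℝ)
      (⨆ x : ℝ, MeasurableSpace.comap (ζ x) inferInstance) _ G' :=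
    @measurable_pi_lambda Ω (Fin (m + 1)) (fun _ => ℝ)
      (⨆ x : ℝ, MeasurableSpace.comap (ζ x) inferInstance) _ G'
      (fun i => measurable_iff_comap_le.2
        (le_iSup (fun y : ℝ => MeasurableSpace.comap (ζ y) inferInstance) (s' i)))
  have hG2 : @Measurable Ω (Fin (m + 1) → ℝ)
      (⨆ x : ℝ, MeasurableSpace.comap (ζ x) inferInstance) _ G :=
    @measurable_pi_lambda Ω (Fin (m + 1)) (fun _ => ℝ)
      (⨆ x : ℝ, MeasurableSpace.comap (ζ x) inferInstance) _ G
      (fun i => measurable_iff_comap_le.2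
        (le_iSup (fun y : ℝ => MeasurableSpace.comap (ζ y) inferInstance) (s i)))
  have hIF' : IndepFun G' F μ :=
    indep_of_indep_of_le_right (indep_of_indep_of_le_left hindep.symm hG'2.comap_le) hF'.comap_le
  have hIF : IndepFun G F μ :=
    indep_of_indep_of_le_right (indep_of_indep_of_le_left hindep.symm hG2.comap_le) hF'.comap_le
  have hpair' : μ.map (fun ω => (G' ω, F ω)) = Q'.prod P :=
    (indepFun_iff_map_prod_eq_prod_map_map hG'meas.aemeasurable hFmeas.aemeasurable).1 hIF'
  have hpair : μ.map (fun ω => (G ω, F ω)) = Q.prod P :=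
    (indepFun_iff_map_prod_eq_prod_map_map hGmeas.aemeasurable hFmeas.aemeasurable).1 hIF
  -- a.e. identification of the processes
  have haeG' : ∀ᵐ ω ∂μ, Ψ (G' ω, F ω) = Vd (G' ω) ω := by
    have h1 : ∀ᵐ ω ∂μ, (G' ω, F ω) ∈ TendS := by
      rw [ae_iff]
      have hset : {ω | ¬ (G' ω, F ω) ∈ TendS} = (fun ω => (G' ω, F ω)) ⁻¹' TendSᶜ := rfl
      rw [hset, ← Measure.map_apply (hG'meas.prodMk hFmeas) hTendSmeas.compl, hpair']
      exact hQ'P0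
    filter_upwards [h1] with ω hω
    exact tendsto_nhds_unique hω (hconv (G' ω) (F ω) (fun x hx => (hZcadlag ω).1 x hx))
  have haeG : ∀ᵐ ω ∂μ, Ψ (G ω, F ω) = Vd (G ω) ω := by
    have h1 : ∀ᵐ ω ∂μ, (G ω, F ω) ∈ TendS := by
      rw [ae_iff]
      have hset : {ω | ¬ (G ω, F ω) ∈ TendS} = (fun ω => (G ω, F ω)) ⁻¹' TendSᶜ := rfl
      rw [hset, ← Measure.map_apply (hGmeas.prodMk hFmeas) hTendSmeas.compl, hpair]
      exact hQP0
    filter_upwards [h1] with ω hω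
    exact tendsto_nhds_unique hω (hconv (G ω) (F ω) (fun x hx => (hZcadlag ω).1 x hx))
  -- final assembly
  set D : (Fin (m + 1) → ℝ) → (Fin (m + 1) → ℝ) := fun v i => (c * t i) ^ κ * v i with hD_def
  have hDmeas : Measurable D :=
    measurable_pi_lambda _ fun i => (measurable_pi_apply i).const_mul _
  have hXa' : ∀ ω, (fun i => Xa κ Z ζ a (c * t i) ω) = D (Vd (G' ω) ω) := by
    intro ω
    funext i
    show Xa κ Z ζ a (c * t i) ω
      = (c * t i) ^ κ * (Real.exp (-(κ * ζ (s' i) ω)) * Z (Real.exp (ζ (s' i) ω)) ω)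
    rw [Xa]
    have harg : a + Real.log (c * t i) = s' i := rfl
    rw [harg, mul_assoc]
  have hXa : ∀ ω, (fun i => c ^ κ * Xa κ Z ζ a (t i) ω) = D (Vd (G ω) ω) := by
    intro ω
    funext i
    show c ^ κ * Xa κ Z ζ a (t i) ω
      = (c * t i) ^ κ * (Real.exp (-(κ * ζ (s i) ω)) * Z (Real.exp (ζ (s i) ω)) ω)
    rw [Xa]
    have harg : a + Real.log (t i) = s i := rfl
    rw [harg, Real.mul_rpow hc.le (htpos i).le]
    ring
  have hmapL : μ.map (fun ω i => Xa κ Z ζ a (c * t i) ω) = ((Q'.prod P).map Ψ).map D := by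
    have h1 : μ.map (fun ω i => Xa κ Z ζ a (c * t i) ω)
        = μ.map (fun ω => D (Ψ (G' ω, F ω))) := by
      refine Measure.map_congr ?_
      filter_upwards [haeG'] with ω hω
      rw [hXa' ω, hω]
    have h2 : μ.map (fun ω => D (Ψ (G' ω, F ω)))
        = ((μ.map (fun ω => (G' ω, F ω))).map Ψ).map D := by
      rw [Measure.map_map hΨmeas (hG'meas.prodMk hFmeas),
        Measure.map_map hDmeas
          (hΨmeas.comp (hG'meas.prodMk hFmeas) : Measurable fun ω => Ψ (G' ω, F ω))]
      rfl
    rw [h1, h2, hpair']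
  have hmapR : μ.map (fun ω i => c ^ κ * Xa κ Z ζ a (t i) ω) = ((Q.prod P).map Ψ).map D := by
    have h1 : μ.map (fun ω i => c ^ κ * Xa κ Z ζ a (t i) ω)
        = μ.map (fun ω => D (Ψ (G ω, F ω))) := by
      refine Measure.map_congr ?_
      filter_upwards [haeG] with ω hω
      rw [hXa ω, hω]
    have h2 : μ.map (fun ω => D (Ψ (G ω, F ω)))
        = ((μ.map (fun ω => (G ω, F ω))).map Ψ).map D := by
      rw [Measure.map_map hΨmeas (hGmeas.prodMk hFmeas),
        Measure.map_map hDmeas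
          (hΨmeas.comp (hGmeas.prodMk hFmeas) : Measurable fun ω => Ψ (G ω, F ω))]
      rfl
    rw [h1, h2, hpair]
  rw [hmapL, hmapR, hcore]

lemma part2_sorted {Ω' : Type} [MeasurableSpace Ω'] (μ : Measure Ω) [IsProbabilityMeasure μ]
    (κ : ℝ) (Z ζ : ℝ → Ω → ℝ)
    (hZmeas : ∀ t, Measurable (Z t))
    (hZcadlag : ∀ ω, CadlagOn fun t => Z t ω) (hζmeas : ∀ t, Measurable (ζ t))
    (hp1 : ∀ (a : ℝ) (c : ℝ), 0 < c → ∀ (n : ℕ) (t : Fin n → ℝ), StrictMono t →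
      (∀ i, Real.exp (-a) ≤ t i) → (∀ i, Real.exp (-a) ≤ c * t i) →
      Measure.map (fun ω i => Xa κ Z ζ a (c * t i) ω) μ
        = Measure.map (fun ω i => c ^ κ * Xa κ Z ζ a (t i) ω) μ)
    (ν : Measure Ω') (X : ℝ → Ω' → ℝ)
    (hXmeas : ∀ t, Measurable (X t))
    (hfdd : ∀ (b : ℝ) (n : ℕ) (t : Fin n → ℝ), (∀ i, Real.exp (-b) ≤ t i) →
      Measure.map (fun ω i => X (t i) ω) ν
        = Measure.map (fun ω i => Xa κ Z ζ b (t i) ω) μ)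
    (c : ℝ) (hc : 0 < c) (k : ℕ) (σ : Fin k → ℝ) (hσ : StrictMono σ)
    (hσpos : ∀ j, 0 < σ j) :
    Measure.map (fun ω j => X (c * σ j) ω) ν
      = Measure.map (fun ω j => c ^ κ * X (σ j) ω) ν := by
  match k, σ, hσ, hσpos with
  | 0, σ, hσ, hσpos =>
    have he : (fun ω (j : Fin 0) => X (c * σ j) ω)
        = fun ω (j : Fin 0) => c ^ κ * X (σ j) ω := by
      funext ω j; exact j.elim0
    rw [he]
  | l + 1, σ, hσ, hσpos =>
  set b : ℝ := max (-Real.log (σ 0)) (-Real.log (c * σ 0)) with hb_def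
  have hb1 : ∀ j, Real.exp (-b) ≤ σ j := by
    intro j
    have h1 : -b ≤ Real.log (σ 0) := by
      have := le_max_left (-Real.log (σ 0)) (-Real.log (c * σ 0))
      simp only [hb_def]; linarith
    calc Real.exp (-b) ≤ Real.exp (Real.log (σ 0)) := Real.exp_le_exp.2 h1
      _ = σ 0 := Real.exp_log (hσpos 0)
      _ ≤ σ j := hσ.monotone (Fin.zero_le j)
  have hb2 : ∀ j, Real.exp (-b) ≤ c * σ j := by
    intro j
    have h1 : -b ≤ Real.log (c * σ 0) := by
      have := le_max_right (-Real.log (σ 0)) (-Real.log (c * σ 0))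
      simp only [hb_def]; linarith
    calc Real.exp (-b) ≤ Real.exp (Real.log (c * σ 0)) := Real.exp_le_exp.2 h1
      _ = c * σ 0 := Real.exp_log (mul_pos hc (hσpos 0))
      _ ≤ c * σ j := by
          have := hσ.monotone (Fin.zero_le j)
          nlinarith
  set Sc : (Fin (l + 1) → ℝ) → (Fin (l + 1) → ℝ) := fun v j => c ^ κ * v j with hSc_def
  have hScmeas : Measurable Sc :=
    measurable_pi_lambda _ fun j => (measurable_pi_apply j).const_mul _
  have hXam : Measurable fun ω (j : Fin (l + 1)) => Xa κ Z ζ b (σ j) ω :=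
    measurable_pi_lambda _ fun j => Xa_measurable κ Z ζ hZmeas hZcadlag hζmeas b (σ j)
  have hXm : Measurable fun ω (j : Fin (l + 1)) => X (σ j) ω :=
    measurable_pi_lambda _ fun j => hXmeas (σ j)
  calc Measure.map (fun ω j => X (c * σ j) ω) ν
      = Measure.map (fun ω j => Xa κ Z ζ b (c * σ j) ω) μ := hfdd b _ (fun j => c * σ j) hb2
    _ = Measure.map (fun ω j => c ^ κ * Xa κ Z ζ b (σ j) ω) μ := hp1 b c hc _ σ hσ hb1 hb2
    _ = Measure.map Sc (Measure.map (fun ω j => Xa κ Z ζ b (σ j) ω) μ) := by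
        rw [Measure.map_map hScmeas hXam]; rfl
    _ = Measure.map Sc (Measure.map (fun ω j => X (σ j) ω) ν) := by rw [hfdd b _ σ hb1]
    _ = Measure.map (fun ω j => c ^ κ * X (σ j) ω) ν := by
        rw [Measure.map_map hScmeas hXm]; rfl

lemma part2 {Ω' : Type} [MeasurableSpace Ω'] (μ : Measure Ω) [IsProbabilityMeasure μ]
    (κ : ℝ) (Z ζ : ℝ → Ω → ℝ)
    (hZmeas : ∀ t, Measurable (Z t))
    (hZcadlag : ∀ ω, CadlagOn fun t => Z t ω) (hζmeas : ∀ t, Measurable (ζ t))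
    (hp1 : ∀ (a : ℝ) (c : ℝ), 0 < c → ∀ (n : ℕ) (t : Fin n → ℝ), StrictMono t →
      (∀ i, Real.exp (-a) ≤ t i) → (∀ i, Real.exp (-a) ≤ c * t i) →
      Measure.map (fun ω i => Xa κ Z ζ a (c * t i) ω) μ
        = Measure.map (fun ω i => c ^ κ * Xa κ Z ζ a (t i) ω) μ)
    (ν : Measure Ω') (X : ℝ → Ω' → ℝ)
    (hν : IsProbabilityMeasure ν)
    (hXmeas : ∀ t, Measurable (X t))
    (hfdd : ∀ (b : ℝ) (n : ℕ) (t : Fin n → ℝ), (∀ i, Real.exp (-b) ≤ t i) →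
      Measure.map (fun ω i => X (t i) ω) ν
        = Measure.map (fun ω i => Xa κ Z ζ b (t i) ω) μ)
    (hX0 : ∀ᵐ ω ∂ν, X 0 ω = 0) :
    SelfSimilar κ X ν := by
  intro c hc n t ht0
  classical
  set Jset : Finset ℝ := (Finset.univ.image t).filter (fun x => 0 < x) with hJ_def
  set k : ℕ := Jset.card with hk_def
  set e : Fin k ≃o {x // x ∈ Jset} := Jset.orderIsoOfFin rfl with he_def
  set σ : Fin k → ℝ := fun j => (e j : ℝ) with hσ_def
  have hσmono : StrictMono σ := fun i j hij => Subtype.coe_lt_coe.2 (e.strictMono hij)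
  have hσpos : ∀ j, 0 < σ j := fun j => (Finset.mem_filter.1 (e j).2).2
  have hmem : ∀ i, 0 < t i → t i ∈ Jset := fun i h =>
    Finset.mem_filter.2 ⟨Finset.mem_image_of_mem t (Finset.mem_univ i), h⟩
  set r : (Fin k → ℝ) → (Fin n → ℝ) :=
    fun v i => if h : 0 < t i then v (e.symm ⟨t i, hmem i h⟩) else 0 with hr_def
  have hrmeas : Measurable r := by
    refine measurable_pi_lambda _ fun i => ?_
    by_cases h : 0 < t i
    · simp only [hr_def, dif_pos h]; exact measurable_pi_apply _
    · simp only [hr_def, dif_neg h]; exact measurable_const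
  have hσe : ∀ (i : Fin n) (h : 0 < t i), σ (e.symm ⟨t i, hmem i h⟩) = t i := by
    intro i h
    simp only [hσ_def]
    rw [e.apply_symm_apply]
  have htzero : ∀ i : Fin n, ¬ 0 < t i → t i = 0 := fun i h =>
    le_antisymm (not_lt.1 h) (ht0 i)
  -- three claims
  have claim1 : ∀ᵐ ω ∂ν, (fun i => X (c * t i) ω) = r (fun j => X (c * σ j) ω) := by
    filter_upwards [hX0] with ω h0
    funext i
    by_cases h : 0 < t i
    · simp only [hr_def, dif_pos h, hσe i h]
    · simp only [hr_def, dif_neg h]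
      rw [htzero i h, mul_zero]
      exact h0
  have claim2 : ∀ᵐ ω ∂ν, (fun i => X (t i) ω) = r (fun j => X (σ j) ω) := by
    filter_upwards [hX0] with ω h0
    funext i
    by_cases h : 0 < t i
    · simp only [hr_def, dif_pos h, hσe i h]
    · simp only [hr_def, dif_neg h]
      rw [htzero i h]
      exact h0
  have claim3 : ∀ v : Fin k → ℝ, r (fun j => c ^ κ * v j) = fun i => c ^ κ * r v i := by
    intro v
    funext i
    by_cases h : 0 < t i
    · simp only [hr_def, dif_pos h]
    · simp only [hr_def, dif_neg h, mul_zero]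
  have hXcσm : Measurable fun ω (j : Fin k) => X (c * σ j) ω :=
    measurable_pi_lambda _ fun j => hXmeas _
  have hXσm : Measurable fun ω (j : Fin k) => X (σ j) ω :=
    measurable_pi_lambda _ fun j => hXmeas _
  have hScn : Measurable fun (v : Fin n → ℝ) i => c ^ κ * v i :=
    measurable_pi_lambda _ fun i => (measurable_pi_apply i).const_mul _
  calc Measure.map (fun ω i => X (c * t i) ω) ν
      = Measure.map (fun ω => r (fun j => X (c * σ j) ω)) ν := Measure.map_congr claim1
    _ = Measure.map r (Measure.map (fun ω j => X (c * σ j) ω) ν) := by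
        rw [Measure.map_map hrmeas hXcσm]; rfl
    _ = Measure.map r (Measure.map (fun ω j => c ^ κ * X (σ j) ω) ν) := by
        rw [part2_sorted μ κ Z ζ hZmeas hZcadlag hζmeas hp1 ν X hXmeas hfdd c hc k σ hσmono hσpos]
    _ = Measure.map r (Measure.map (fun v (j : Fin k) => c ^ κ * v j)
          (Measure.map (fun ω j => X (σ j) ω) ν)) := by
        rw [Measure.map_map (measurable_pi_lambda _ fun j =>
          (measurable_pi_apply j).const_mul _ : Measurable fun (v : Fin k → ℝ) j => c ^ κ * v j) hXσm]
        rfl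
    _ = Measure.map (fun v i => c ^ κ * r v i) (Measure.map (fun ω j => X (σ j) ω) ν) := by
        rw [Measure.map_map hrmeas (measurable_pi_lambda _ fun j =>
          (measurable_pi_apply j).const_mul _ : Measurable fun (v : Fin k → ℝ) j => c ^ κ * v j)]
        have : (r ∘ fun v (j : Fin k) => c ^ κ * v j) = fun v i => c ^ κ * r v i := by
          funext v
          exact claim3 v
        rw [this]
    _ = Measure.map (fun v i => c ^ κ * v i)
          (Measure.map r (Measure.map (fun ω j => X (σ j) ω) ν)) := by
        rw [Measure.map_map hScn hrmeas]; rfl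
    _ = Measure.map (fun v i => c ^ κ * v i) (Measure.map (fun ω i => X (t i) ω) ν) := by
        rw [Measure.map_map hrmeas hXσm, Measure.map_congr claim2]; rfl
    _ = Measure.map (fun ω i => c ^ κ * X (t i) ω) ν := by
        rw [Measure.map_map hScn (measurable_pi_lambda _ fun i => hXmeas (t i))]; rfl

end AuxLemmas

/-- For a càdlàg `κ`-self-similar process `Z` and a subordinator `ζ`
independent of `Z`, with `X^{(a)}_t = t^κ e^{−κ ζ_{a+ln t}} Z_{exp(ζ_{a+ln t})}` for
`t ≥ e^{−a}`: for every `c > 0` and all times `t₁ < ⋯ < t_n` with `t_i ≥ e^{−a}` and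
`c t_i ≥ e^{−a}`, the vector `(X^{(a)}_{c t₁}, …, X^{(a)}_{c t_n})` is distributed as
`c^κ (X^{(a)}_{t₁}, …, X^{(a)}_{t_n})`. In particular, any process `X` whose
finite-dimensional distributions agree with those of `X^{(a)}` on `[e^{−a}, ∞)` for every `a`,
and which starts at `0`, is `κ`-self-similar (so the construction extends to `t = 0` with
`X₀ = 0`). -/
theorem stmt7 {Ω : Type*} [MeasurableSpace Ω] (μ : Measure Ω) [IsProbabilityMeasure μ]
    (κ : ℝ) (hκ : 0 < κ) (Z ζ : ℝ → Ω → ℝ)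
    (hZmeas : ∀ t, Measurable (Z t))
    (hZcadlag : ∀ ω, CadlagOn fun t => Z t ω)
    (hZss : SelfSimilar κ Z μ)
    (hζ : IsSubordinator ζ μ)
    (hindep : IndepProcesses Z ζ μ)
    (a : ℝ) :
    -- the scaling identity for finite-dimensional vectors of `X^{(a)}`
    (∀ c : ℝ, 0 < c → ∀ (n : ℕ) (t : Fin n → ℝ), StrictMono t →
      (∀ i, Real.exp (-a) ≤ t i) → (∀ i, Real.exp (-a) ≤ c * t i) →
      Measure.map (fun ω i => Xa κ Z ζ a (c * t i) ω) μ
        = Measure.map (fun ω i => c ^ κ * Xa κ Z ζ a (t i) ω) μ) ∧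
    -- in particular, the process of the time-change construction is `κ`-self-similar
    -- (with the extension `X₀ = 0`)
    (∀ (Ω' : Type) [MeasurableSpace Ω'], ∀ (ν : Measure Ω') (X : ℝ → Ω' → ℝ),
      IsProbabilityMeasure ν → (∀ t, Measurable (X t)) →
      (∀ (b : ℝ) (n : ℕ) (t : Fin n → ℝ), (∀ i, Real.exp (-b) ≤ t i) →
        Measure.map (fun ω i => X (t i) ω) ν
          = Measure.map (fun ω i => Xa κ Z ζ b (t i) ω) μ) →
      (∀ᵐ ω ∂ν, X 0 ω = 0) →
      SelfSimilar κ X ν) := by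
  constructor
  · intro c hc n t ht hta hcta
    exact part1 μ κ Z ζ hZmeas hZcadlag hZss hζ hindep a c hc n t ht hta hcta
  · intro Ω' _ ν X hν hXmeas hfdd hX0
    exact part2 μ κ Z ζ hZmeas hZcadlag hζ.meas
      (fun b c hc n t ht h1 h2 =>
        part1 μ κ Z ζ hZmeas hZcadlag hZss hζ hindep b c hc n t ht h1 h2)
      ν X hν hXmeas hfdd hX0

end
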